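/- For every signature Σ and every monad T, the T-runners for Σ are in bijective correspondence with the monad morphisms from the tree monad Tree_Σ to T: the map sending a runner (coop_op)_op to the induced monad morphism r (determined by r_X(return x) = η_X(x) and r_X(op(a, κ)) = (r_X ∘ κ)†(coop_op a)) is a bijection, with inverse sending a monad morphism θ to the runner with co-operations coop_op(a) := θ_{B_op}(op(a, fun b => return b)). -/

import Mathlib

/-- An algebraic signature: operation symbols with parameter and arity types. -/
structure Sig where
  Op : Type
  Par : Op → Type
  Ar : Op → Type

/-- Computation trees over a signature. -/
inductive CTree (σ : Sig) (X : Type) : Type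
  | ret : X → CTree σ X
  | node : (op : σ.Op) → σ.Par op → (σ.Ar op → CTree σ X) → CTree σ X

/-- Kleisli extension `f†` of `f : X → CTree σ Y`. -/
def CTree.kext {σ : Sig} {X Y : Type} (f : X → CTree σ Y) : CTree σ X → CTree σ Y
  | .ret x => f x
  | .node op a κ => .node op a fun b => CTree.kext f (κ b)

/-- The family of maps `r_X : Tree_σ(X) → T X` induced by a `T`-runner
`coop` for `σ`: `r(return x) = η x` and `r(op(a, κ)) = (r ∘ κ)†(coop op a)`. -/
def runT (σ : Sig) (T : Type → Type)
    (eta : (X : Type) → X → T X)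
    (kext : (X Y : Type) → (X → T Y) → T X → T Y)
    (coop : ∀ op : σ.Op, σ.Par op → T (σ.Ar op))
    {X : Type} : CTree σ X → T X
  | .ret x => eta X x
  | .node op a κ => kext (σ.Ar op) X (fun b => runT σ T eta kext coop (κ b)) (coop op a)


/-- Monad morphisms from the tree monad `Tree_σ` to a monad `(T, eta, kext)`. -/
def MonadMor (σ : Sig) (T : Type → Type)
    (eta : (X : Type) → X → T X)
    (kext : (X Y : Type) → (X → T Y) → T X → T Y) : Type 1 :=
  { θ : (X : Type) → CTree σ X → T X //
      (∀ (X : Type) (x : X), θ X (CTree.ret x) = eta X x) ∧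
      (∀ (X Y : Type) (f : X → CTree σ Y) (t : CTree σ X),
        θ Y (CTree.kext f t) = kext X Y (fun x => θ Y (f x)) (θ X t)) }

/-- `T`-runners for `σ` are in bijective correspondence with monad morphisms
`Tree_σ → T`: the map `F` sending a runner to its induced monad morphism is a
bijection, whose inverse sends a monad morphism `θ` to the runner with
co-operations `coop op a := θ (op(a, fun b => return b))`. -/
theorem runners_biject_with_monad_morphisms (σ : Sig) (T : Type → Type)
    (eta : (X : Type) → X → T X)
    (kext : (X Y : Type) → (X → T Y) → T X → T Y)
    (law1 : ∀ (X Y : Type) (f : X → T Y) (x : X), kext X Y f (eta X x) = f x)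
    (law2 : ∀ (X : Type) (t : T X), kext X X (eta X) t = t)
    (law3 : ∀ (X Y Z : Type) (f : X → T Y) (g : Y → T Z) (t : T X),
      kext X Z (fun x => kext Y Z g (f x)) t = kext Y Z g (kext X Y f t)) :
    ∃ F : (∀ op : σ.Op, σ.Par op → T (σ.Ar op)) → MonadMor σ T eta kext,
      (∀ coop, (F coop).1 = fun X => runT σ T eta kext coop (X := X)) ∧
      Function.Bijective F ∧
      (∀ θ : MonadMor σ T eta kext,
        F (fun op a => θ.1 (σ.Ar op) (CTree.node op a (fun b => CTree.ret b))) = θ) ∧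
      (∀ coop op a,
        (F coop).1 (σ.Ar op) (CTree.node op a (fun b => CTree.ret b)) = coop op a) := by
  have hk : ∀ (coop : ∀ op : σ.Op, σ.Par op → T (σ.Ar op)) (X Y : Type)
      (f : X → CTree σ Y) (t : CTree σ X),
      runT σ T eta kext coop (CTree.kext f t)
        = kext X Y (fun x => runT σ T eta kext coop (f x)) (runT σ T eta kext coop t) := by
    intro coop X Y f t
    induction t with
    | ret x => simp [CTree.kext, runT, law1]
    | node op a κ ih =>
        simp only [CTree.kext, runT]
        rw [← law3]
        congr 1
        funext b
        exact ih b
  refine ⟨fun coop => ⟨fun X => runT σ T eta kext coop (X := X),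
    fun X x => rfl, fun X Y f t => hk coop X Y f t⟩, fun coop => rfl, ?_, ?_, ?_⟩
  · -- bijective
    constructor
    · intro c1 c2 h
      have := congrArg Subtype.val h
      funext op a
      have h2 := congrArg (fun g => g (σ.Ar op) (CTree.node op a fun b => CTree.ret b)) this
      simpa [runT, law2] using h2
    · intro θ
      refine ⟨fun op a => θ.1 (σ.Ar op) (CTree.node op a fun b => CTree.ret b), ?_⟩
      apply Subtype.ext
      funext X t
      show runT σ T eta kext _ t = θ.1 X t
      induction t with
      | ret x => exact (θ.2.1 X x).symm
      | node op a κ ih =>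
          have hnode : CTree.node op a κ
              = CTree.kext κ (CTree.node op a fun b => CTree.ret b) := by
            simp [CTree.kext]
          rw [hnode, θ.2.2]
          show kext (σ.Ar op) X (fun b => runT σ T eta kext _ (κ b)) _ = _
          congr 1
          funext b
          exact ih b
  · intro θ
    apply Subtype.ext
    funext X t
    show runT σ T eta kext _ t = θ.1 X t
    induction t with
    | ret x => exact (θ.2.1 X x).symm
    | node op a κ ih =>
        have hnode : CTree.node op a κ
            = CTree.kext κ (CTree.node op a fun b => CTree.ret b) := by
          simp [CTree.kext]
        rw [hnode, θ.2.2]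
        show kext (σ.Ar op) X (fun b => runT σ T eta kext _ (κ b)) _ = _
        congr 1
        funext b
        exact ih b
  · intro coop op a
    simp [runT, law2]
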